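/- A clockwise Green walk around a finite tree (ribbon graph structure) visits both half-edges of every edge; consequently a clockwise double-stepped Green walk visits exactly one half-edge of each edge of the tree before leaving it. -/

import Mathlib

/-!
A ribbon graph is encoded as a combinatorial map on a finite set `H` of half-edges:
`sigma` is the fixed-point-free involution pairing the two half-edges of each edge,
and `rho` is the permutation whose cycles are the cyclic orderings of the half-edges
around each vertex.  Edges are the orbits of `sigma`, vertices the orbits of `rho`.
The Green walk step sends a half-edge `x` at a vertex `v` to the half-edge `y`
whose opposite half-edge is the successor `rho x` of `x` at `v`, i.e. `y = sigma (rho x)`.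
-/

structure RibbonGraph (H : Type) where
  sigma : Equiv.Perm H
  rho : Equiv.Perm H
  invol : ∀ x, sigma (sigma x) = x
  noFix : ∀ x, sigma x ≠ x
  conn : ∀ x y, Relation.EqvGen (fun a b => sigma a = b ∨ rho a = b) x y

/-- The orbit ("same cycle") setoid of a permutation. -/
def sameCycleSetoid {H : Type} (π : Equiv.Perm H) : Setoid H :=
  ⟨π.SameCycle, ⟨fun x => Equiv.Perm.SameCycle.refl π x, fun h => h.symm,
    fun h₁ h₂ => h₁.trans h₂⟩⟩

namespace RibbonGraph

variable {H : Type}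

/-- The step map of the (anticlockwise) Green walk: `x ↦ sigma (rho x)`. -/
def step (G : RibbonGraph H) : Equiv.Perm H := G.rho.trans G.sigma

/-- The step map of the clockwise Green walk: `x ↦ sigma (rho⁻¹ x)`. -/
def stepC (G : RibbonGraph H) : Equiv.Perm H := G.rho.symm.trans G.sigma

/-- The number of edges: the number of orbits of the involution `sigma`. -/
noncomputable def numEdges (G : RibbonGraph H) : ℕ := Nat.card (Quotient (sameCycleSetoid G.sigma))

/-- The number of vertices: the number of orbits of `rho`. -/
noncomputable def numVertices (G : RibbonGraph H) : ℕ := Nat.card (Quotient (sameCycleSetoid G.rho))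

/-- A (connected) ribbon graph is a tree when `#vertices = #edges + 1`. -/
def IsTree (G : RibbonGraph H) : Prop := G.numVertices = G.numEdges + 1

/-- A half-edge `x` spans a bridge if its edge `{x, sigma x}` disconnects the graph:
there is no walk from `x` to `sigma x` avoiding that edge. -/
def IsBridge (G : RibbonGraph H) (x₀ : H) : Prop :=
  ¬ Relation.ReflTransGen
      (fun a b => G.rho a = b ∨ G.rho b = a ∨ (G.sigma a = b ∧ a ≠ x₀ ∧ a ≠ G.sigma x₀))
      x₀ (G.sigma x₀)

end RibbonGraph


open Finset Module

namespace GreenAux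

variable {H : Type} [Fintype H]

/-- The subspace of functions `H → ZMod 2` invariant under a permutation. -/
def fixSub (π : Equiv.Perm H) : Submodule (ZMod 2) (H → ZMod 2) where
  carrier := {f | ∀ x, f (π x) = f x}
  add_mem' := fun hf hg x => by simp only [Pi.add_apply, hf x, hg x]
  zero_mem' := fun x => rfl
  smul_mem' := fun c f hf x => by simp only [Pi.smul_apply, hf x]

lemma fix_pow {π : Equiv.Perm H} {f : H → ZMod 2} (hf : f ∈ fixSub π) :
    ∀ (i : ℕ) (x : H), f ((π ^ i) x) = f x := by
  intro i
  induction i with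
  | zero => intro x; simp
  | succ n ih =>
    intro x
    rw [pow_succ', Equiv.Perm.mul_apply, hf, ih]

lemma fix_of_sameCycle {π : Equiv.Perm H} {f : H → ZMod 2} (hf : f ∈ fixSub π)
    {x y : H} (h : π.SameCycle x y) : f x = f y := by
  obtain ⟨i, _, hi⟩ := h.exists_pow_eq'
  rw [← hi, fix_pow hf]

/-- The fixed subspace is linearly equivalent to functions on the orbit quotient. -/
noncomputable def fixEquiv (π : Equiv.Perm H) :
    fixSub π ≃ₗ[ZMod 2] (Quotient (sameCycleSetoid π) → ZMod 2) where
  toFun f := Quotient.lift (f : H → ZMod 2) (fun a b h => fix_of_sameCycle f.2 h)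
  map_add' f g := by
    funext q
    induction q using Quotient.ind
    rfl
  map_smul' c f := by
    funext q
    induction q using Quotient.ind
    rfl
  invFun g := ⟨fun x => g (Quotient.mk (sameCycleSetoid π) x), by
    intro x
    have h : Quotient.mk (sameCycleSetoid π) (π x) = Quotient.mk (sameCycleSetoid π) x :=
      Quotient.sound ((Equiv.Perm.sameCycle_apply_right.2 (Equiv.Perm.SameCycle.refl π x)).symm :
        (sameCycleSetoid π).r (π x) x)
    show g (Quotient.mk (sameCycleSetoid π) (π x)) = g (Quotient.mk (sameCycleSetoid π) x)
    rw [h]⟩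
  left_inv f := by ext x; rfl
  right_inv g := by
    funext q
    induction q using Quotient.ind
    rfl

lemma finrank_fixSub (π : Equiv.Perm H) :
    finrank (ZMod 2) (fixSub π) = Nat.card (Quotient (sameCycleSetoid π)) := by
  have : Fintype (Quotient (sameCycleSetoid π)) := Fintype.ofFinite _
  rw [(fixEquiv π).finrank_eq, finrank_fintype_fun_eq_card, Nat.card_eq_fintype_card]

variable (G : RibbonGraph H)

lemma sigma_mul_self : G.sigma * G.sigma = 1 := by
  ext z
  simp [Equiv.Perm.mul_apply, G.invol z]

lemma sameCycle_sigma_iff {x y : H} : G.sigma.SameCycle x y ↔ y = x ∨ y = G.sigma x := by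
  constructor
  · rintro ⟨n, rfl⟩
    have h2 : G.sigma ^ (2 : ℤ) = 1 := by
      rw [show (2 : ℤ) = 1 + 1 by norm_num, zpow_add, zpow_one, sigma_mul_self]
    rcases Int.even_or_odd n with ⟨k, hk⟩ | ⟨k, hk⟩
    · left
      rw [hk, show k + k = 2 * k by ring, zpow_mul, h2, one_zpow, Equiv.Perm.one_apply]
    · right
      rw [hk, zpow_add, zpow_one, zpow_mul, h2, one_zpow, Equiv.Perm.mul_apply,
        Equiv.Perm.one_apply]
  · rintro (rfl | rfl)
    · exact Equiv.Perm.SameCycle.refl _ _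
    · exact ⟨1, by simp⟩

lemma card_H : Fintype.card H = 2 * G.numEdges := by
  classical
  have : Fintype (Quotient (sameCycleSetoid G.sigma)) := Fintype.ofFinite _
  have h2 : ∀ q : Quotient (sameCycleSetoid G.sigma),
      Fintype.card {x // Quotient.mk (sameCycleSetoid G.sigma) x = q} = 2 := by
    intro q
    have hiff : ∀ x : H,
        Quotient.mk (sameCycleSetoid G.sigma) x = q ↔ x = q.out ∨ x = G.sigma q.out := by
      intro x
      constructor
      · intro h
        rw [← Quotient.out_eq q] at h
        have hs : G.sigma.SameCycle x q.out := Quotient.eq.1 h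
        rcases (sameCycle_sigma_iff G).1 hs with h1 | h1
        · exact Or.inl h1.symm
        · right
          rw [h1, G.invol]
      · rintro (rfl | rfl)
        · exact Quotient.out_eq q
        · have h : G.sigma.SameCycle (G.sigma q.out) q.out := ⟨1, by simp [G.invol]⟩
          exact (Quotient.sound (h : (sameCycleSetoid G.sigma).r _ _)).trans (Quotient.out_eq q)
    have hiff2 : ∀ x : H, (x = q.out ∨ x = G.sigma q.out) ↔
        x ∈ ({q.out, G.sigma q.out} : Finset H) := by
      intro x
      simp [Finset.mem_insert, Finset.mem_singleton]
    rw [Fintype.card_congr ((Equiv.subtypeEquivRight hiff).trans (Equiv.subtypeEquivRight hiff2)),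
      Fintype.card_coe, Finset.card_pair (Ne.symm (G.noFix q.out))]
  calc Fintype.card H
      = Fintype.card (Σ q : Quotient (sameCycleSetoid G.sigma),
          {x // Quotient.mk (sameCycleSetoid G.sigma) x = q}) :=
        (Fintype.card_congr (Equiv.sigmaFiberEquiv _)).symm
    _ = ∑ q : Quotient (sameCycleSetoid G.sigma),
          Fintype.card {x // Quotient.mk (sameCycleSetoid G.sigma) x = q} :=
        Fintype.card_sigma
    _ = ∑ _q : Quotient (sameCycleSetoid G.sigma), 2 := by
        exact Finset.sum_congr rfl (fun q _ => h2 q)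
    _ = 2 * G.numEdges := by
        rw [Finset.sum_const, smul_eq_mul, RibbonGraph.numEdges, Nat.card_eq_fintype_card,
          Finset.card_univ, mul_comm]

lemma const_of_mem_inf {f : H → ZMod 2} (hs : f ∈ fixSub G.sigma) (hr : f ∈ fixSub G.rho)
    (x y : H) : f x = f y := by
  induction G.conn x y with
  | rel a b h =>
    rcases h with h | h
    · rw [← h]; exact (hs a).symm
    · rw [← h]; exact (hr a).symm
  | refl a => rfl
  | symm a b _ ih => exact ih.symm
  | trans a b c _ _ ih1 ih2 => exact ih1.trans ih2

lemma finrank_inf [Nonempty H] :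
    finrank (ZMod 2) ↥(fixSub G.sigma ⊓ fixSub G.rho) = 1 := by
  let ev : ↥(fixSub G.sigma ⊓ fixSub G.rho) →ₗ[ZMod 2] ZMod 2 :=
    { toFun := fun f => (f : H → ZMod 2) (Classical.arbitrary H)
      map_add' := fun f g => rfl
      map_smul' := fun c f => rfl }
  have hbij : Function.Bijective ev := by
    constructor
    · refine (injective_iff_map_eq_zero ev).2 (fun a ha => ?_)
      have ha2 := a.2
      rw [Submodule.mem_inf] at ha2
      apply Subtype.ext
      funext x
      have := const_of_mem_inf G ha2.1 ha2.2 x (Classical.arbitrary H)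
      rw [show ((a : H → ZMod 2) (Classical.arbitrary H)) = 0 from ha] at this
      exact this
    · intro c
      exact ⟨⟨fun _ => c, ⟨fun x => rfl, fun x => rfl⟩⟩, rfl⟩
  rw [(LinearEquiv.ofBijective ev hbij).finrank_eq, finrank_self]

lemma sup_eq_top [Nonempty H] (hTree : G.IsTree) :
    fixSub G.sigma ⊔ fixSub G.rho = ⊤ := by
  apply Submodule.eq_top_of_finrank_eq
  have h := Submodule.finrank_sup_add_finrank_inf_eq (fixSub G.sigma) (fixSub G.rho)
  rw [finrank_fixSub, finrank_fixSub, finrank_inf] at h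
  rw [finrank_fintype_fun_eq_card, card_H G]
  unfold RibbonGraph.IsTree RibbonGraph.numVertices RibbonGraph.numEdges at hTree
  unfold RibbonGraph.numEdges
  omega

lemma decomp [Nonempty H] (hTree : G.IsTree) (f : H → ZMod 2) :
    ∃ a b : H → ZMod 2, a ∈ fixSub G.sigma ∧ b ∈ fixSub G.rho ∧ f = a + b := by
  have hf : f ∈ fixSub G.sigma ⊔ fixSub G.rho := by
    rw [sup_eq_top G hTree]
    trivial
  obtain ⟨a, ha, b, hb, hab⟩ := Submodule.mem_sup.1 hf
  exact ⟨a, b, ha, hb, hab.symm⟩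

lemma zhelp1 : ∀ p q r s : ZMod 2, p + q = r + s → r + p = q + s := by decide

lemma zhelp2 : ∀ p q : ZMod 2, p + q = 0 → p = q := by decide

lemma zhelp3 : ∀ p : ZMod 2, p + p = 0 := by decide

lemma zhelp4 : ∀ p q : ZMod 2, p + q = 1 → q = p + 1 := by decide

/-- The coboundary map `f ↦ f + f ∘ sigma`. -/
def Dmap : (H → ZMod 2) →ₗ[ZMod 2] (H → ZMod 2) where
  toFun f := fun x => f x + f (G.sigma x)
  map_add' f g := by funext x; simp only [Pi.add_apply]; ring
  map_smul' c f := by funext x; simp only [Pi.smul_apply, RingHom.id_apply, smul_add]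

set_option synthInstance.maxHeartbeats 1000000 in
set_option maxHeartbeats 1000000 in
lemma exists_bipartite [Nonempty H] (hTree : G.IsTree) :
    ∃ g : H → ZMod 2, (∀ x, g (G.rho x) = g x) ∧ ∀ x, g (G.sigma x) = g x + 1 := by
  classical
  set B := fixSub G.rho with hBdef
  set D0 : ↥B →ₗ[ZMod 2] (H → ZMod 2) := (Dmap G).comp B.subtype with hD0def
  have hrange : LinearMap.range D0 ≤ fixSub G.sigma := by
    rintro f ⟨b, rfl⟩
    intro x
    show (b : H → ZMod 2) (G.sigma x) + (b : H → ZMod 2) (G.sigma (G.sigma x)) =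
      (b : H → ZMod 2) x + (b : H → ZMod 2) (G.sigma x)
    rw [G.invol, add_comm]
  have hker : LinearMap.ker D0 = Submodule.comap B.subtype (fixSub G.sigma ⊓ B) := by
    ext b
    simp only [LinearMap.mem_ker, Submodule.mem_comap, Submodule.mem_inf]
    constructor
    · intro h
      refine ⟨fun x => ?_, b.2⟩
      have hx : (b : H → ZMod 2) x + (b : H → ZMod 2) (G.sigma x) = 0 := congrFun h x
      exact (zhelp2 _ _ hx).symm
    · intro h
      funext x
      show (b : H → ZMod 2) x + (b : H → ZMod 2) (G.sigma x) = 0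
      have h1 : (b : H → ZMod 2) (G.sigma x) = (b : H → ZMod 2) x := h.1 x
      rw [h1]
      exact zhelp3 _
  have hker1 : finrank (ZMod 2) ↥(LinearMap.ker D0) = 1 := by
    rw [hker,
      (Submodule.comapSubtypeEquivOfLe (inf_le_right : fixSub G.sigma ⊓ B ≤ B)).finrank_eq,
      finrank_inf G]
  have hcount := LinearMap.finrank_range_add_finrank_ker D0
  rw [hker1, finrank_fixSub] at hcount
  have hrk : G.numEdges ≤ finrank (ZMod 2) ↥(LinearMap.range D0) := by
    unfold RibbonGraph.IsTree RibbonGraph.numVertices RibbonGraph.numEdges at hTree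
    unfold RibbonGraph.numEdges
    omega
  have heq : LinearMap.range D0 = fixSub G.sigma := by
    apply Submodule.eq_of_le_of_finrank_le hrange
    rw [finrank_fixSub]
    exact hrk
  have h1A : (fun _ => (1 : ZMod 2)) ∈ fixSub G.sigma := fun x => rfl
  rw [← heq] at h1A
  obtain ⟨b, hb⟩ := h1A
  refine ⟨(b : H → ZMod 2), b.2, fun x => ?_⟩
  have hx : (b : H → ZMod 2) x + (b : H → ZMod 2) (G.sigma x) = 1 := congrFun hb x
  exact zhelp4 _ _ hx

lemma const_of_stepC_fixed [Nonempty H] (hTree : G.IsTree) (f : H → ZMod 2)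
    (hf : ∀ z, f (G.stepC z) = f z) (x y : H) : f x = f y := by
  classical
  have hsc : ∀ z, f (G.sigma z) = f (G.rho z) := by
    intro z
    have h1 := hf (G.rho z)
    have hst : G.stepC (G.rho z) = G.sigma z := by
      show G.sigma (G.rho.symm (G.rho z)) = G.sigma z
      rw [Equiv.symm_apply_apply]
    rw [hst] at h1
    exact h1
  obtain ⟨a, b, ha, hb, rfl⟩ := decomp G hTree f
  have e : ∀ z, a z + b (G.sigma z) = a (G.rho z) + b z := by
    intro z
    have h1 := hsc z
    simp only [Pi.add_apply] at h1
    rw [ha z, hb z] at h1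
    exact h1
  set h : H → ZMod 2 := fun z => a (G.rho z) + a z with hhdef
  have hhb : ∀ z, h z = b (G.sigma z) + b z := fun z => zhelp1 _ _ _ _ (e z)
  have hhσ : ∀ z, h (G.sigma z) = h z := by
    intro z
    rw [hhb, hhb, G.invol, add_comm]
  have key : ∀ u : H → ZMod 2, ∑ x : H, h x * u x = 0 := by
    intro u
    obtain ⟨a', b', ha', hb', rfl⟩ := decomp G hTree u
    have S1 : ∑ x : H, h x * a' x = 0 := by
      apply Finset.sum_ninvolution G.sigma
      · intro z
        rw [hhσ z, ha' z]
        exact zhelp3 _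
      · intro z _
        exact G.noFix z
      · intro z
        exact Finset.mem_univ _
      · intro z
        exact G.invol z
    have S2 : ∑ x : H, h x * b' x = 0 := by
      have hre : ∑ x : H, a (G.rho x) * b' x = ∑ x : H, a x * b' x := by
        rw [Finset.sum_congr rfl (fun x _ => by rw [← hb' x])]
        exact Fintype.sum_equiv G.rho _ _ (fun x => rfl)
      calc ∑ x : H, h x * b' x
          = ∑ x : H, (a (G.rho x) * b' x + a x * b' x) := by
            apply Finset.sum_congr rfl
            intro z _
            show (a (G.rho z) + a z) * b' z = _
            ring
        _ = (∑ x : H, a (G.rho x) * b' x) + ∑ x : H, a x * b' x := Finset.sum_add_distrib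
        _ = 0 := by rw [hre]; exact zhelp3 _
    calc ∑ x : H, h x * (a' + b') x
        = ∑ x : H, (h x * a' x + h x * b' x) := by
          apply Finset.sum_congr rfl
          intro z _
          simp only [Pi.add_apply]
          ring
      _ = (∑ x : H, h x * a' x) + ∑ x : H, h x * b' x := Finset.sum_add_distrib
      _ = 0 := by rw [S1, S2, add_zero]
  have hzero : ∀ z, h z = 0 := by
    intro z
    have hu := key (fun y => if y = z then 1 else 0)
    simp only [mul_ite, mul_one, mul_zero] at hu
    rwa [Finset.sum_ite_eq' Finset.univ z h, if_pos (Finset.mem_univ z)] at hu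
  have hfρ : ∀ z, (a + b) (G.rho z) = (a + b) z := by
    intro z
    simp only [Pi.add_apply]
    rw [zhelp2 _ _ (hzero z), hb z]
  have hfσ : ∀ z, (a + b) (G.sigma z) = (a + b) z := fun z => (hsc z).trans (hfρ z)
  exact const_of_mem_inf G hfσ hfρ x y

lemma stepC_sameCycle [Nonempty H] (hTree : G.IsTree) (x y : H) :
    G.stepC.SameCycle x y := by
  classical
  by_contra hxy
  set f : H → ZMod 2 := fun z => if G.stepC.SameCycle x z then 1 else 0 with hfdef
  have hinv : ∀ z, f (G.stepC z) = f z := by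
    intro z
    simp only [hfdef, Equiv.Perm.sameCycle_apply_right]
  have hc := const_of_stepC_fixed G hTree f hinv x y
  simp only [hfdef, if_pos (Equiv.Perm.SameCycle.refl _ _), if_neg hxy] at hc
  exact one_ne_zero hc

lemma zhelp5 : ∀ p q : ZMod 2, p = q + 1 → q = p + 1 := by decide

lemma zhelp6 : ∀ p a b : ZMod 2, p + a = p + b + 1 → a = b + 1 := by decide

lemma zhelp7 : ∀ p : ZMod 2, ¬ p = p + 1 := by decide

lemma zcast_two_mul : ∀ m : ℤ, ((2 * m : ℤ) : ZMod 2) = 0 := by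
  intro m
  push_cast
  generalize (m : ZMod 2) = c
  revert c
  decide

lemma zcast_succ : ∀ m : ℤ, ((m + 1 : ℤ) : ZMod 2) = (m : ZMod 2) + 1 := by
  intro m
  push_cast
  rfl

lemma zcast_pred : ∀ m : ℤ, ((m - 1 : ℤ) : ZMod 2) = (m : ZMod 2) + 1 := by
  intro m
  push_cast
  generalize (m : ZMod 2) = c
  revert c
  decide

lemma g_step (g : H → ZMod 2) (hgρ : ∀ x, g (G.rho x) = g x)
    (hgσ : ∀ x, g (G.sigma x) = g x + 1) : ∀ x, g (G.stepC x) = g x + 1 := by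
  intro x
  show g (G.sigma (G.rho.symm x)) = g x + 1
  rw [hgσ]
  have h1 := hgρ (G.rho.symm x)
  rw [Equiv.apply_symm_apply] at h1
  rw [h1]

lemma g_zpow (g : H → ZMod 2) (hstep : ∀ x, g (G.stepC x) = g x + 1) :
    ∀ (n : ℤ) (x : H), g ((G.stepC ^ n) x) = g x + (n : ZMod 2) := by
  have hinv : ∀ x, g (G.stepC⁻¹ x) = g x + 1 := by
    intro x
    have h1 := hstep (G.stepC⁻¹ x)
    rw [Equiv.Perm.coe_inv, Equiv.apply_symm_apply] at h1
    exact zhelp5 _ _ h1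
  intro n
  induction n using Int.induction_on with
  | zero => intro x; simp
  | succ n ih =>
    intro x
    have hzz : (G.stepC ^ ((n : ℤ) + 1)) x = (G.stepC ^ (n : ℤ)) (G.stepC x) := by
      rw [zpow_add_one]
      rfl
    rw [hzz, ih, hstep, zcast_succ]
    ring
  | pred n ih =>
    intro x
    have hzz : (G.stepC ^ (-(n : ℤ) - 1)) x = (G.stepC ^ (-(n : ℤ))) (G.stepC⁻¹ x) := by
      rw [zpow_sub_one]
      rfl
    rw [hzz, ih, hinv, zcast_pred]
    ring

end GreenAux

/-- A clockwise Green walk around a finite tree visits both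
half-edges of every edge (it is a single walk through all half-edges), and
consequently a clockwise double-stepped Green walk visits exactly one half-edge of
each edge of the tree: for every half-edge `y`, exactly one of `y`, `sigma y` lies
on the clockwise double-stepped Green walk through `x`. -/
theorem tree_clockwise_green_walk_half_edges
    (H : Type) [Fintype H] [Nonempty H] (G : RibbonGraph H) (hTree : G.IsTree) :
    (∀ x y : H, G.stepC.SameCycle x y) ∧
      (∀ x y : H,
        (G.stepC ^ 2).SameCycle x y ↔ ¬ (G.stepC ^ 2).SameCycle x (G.sigma y)) := by
  classical
  obtain ⟨g, hgρ, hgσ⟩ := GreenAux.exists_bipartite G hTree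
  have hstep := GreenAux.g_step G g hgρ hgσ
  have hz := GreenAux.g_zpow G g hstep
  have part1 : ∀ x y : H, G.stepC.SameCycle x y :=
    fun x y => GreenAux.stepC_sameCycle G hTree x y
  have hpow2 : ∀ n : ℤ, (G.stepC ^ 2) ^ n = G.stepC ^ (2 * n) := by
    intro n
    have h22 : G.stepC ^ (2 : ℤ) = G.stepC ^ (2 : ℕ) := by
      rw [show (2 : ℤ) = ((2 : ℕ) : ℤ) by norm_num, zpow_natCast]
    rw [← h22, ← zpow_mul]
  refine ⟨part1, fun x y => ?_⟩
  constructor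
  · rintro ⟨m, hm⟩ hcon
    obtain ⟨k, hk⟩ := hcon
    rw [hpow2] at hm hk
    have h1 : g y = g x := by
      rw [← hm, hz, GreenAux.zcast_two_mul, add_zero]
    have h2 : g (G.sigma y) = g x := by
      rw [← hk, hz, GreenAux.zcast_two_mul, add_zero]
    have h3 := hgσ y
    rw [h1, h2] at h3
    exact GreenAux.zhelp7 _ h3
  · intro hcon
    obtain ⟨n, hn⟩ := part1 x y
    obtain ⟨k, hk⟩ := part1 x (G.sigma y)
    have hgy : g y = g x + (n : ZMod 2) := by rw [← hn, hz]
    have hgsy : g (G.sigma y) = g x + (k : ZMod 2) := by rw [← hk, hz]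
    have hpar : (k : ZMod 2) = (n : ZMod 2) + 1 := by
      have h3 := hgσ y
      rw [hgy, hgsy] at h3
      exact GreenAux.zhelp6 _ _ _ h3
    have hcases : (n : ZMod 2) = 0 ∨ (n : ZMod 2) = 1 := by
      have : ∀ c : ZMod 2, c = 0 ∨ c = 1 := by decide
      exact this _
    rcases hcases with h0 | h1
    · obtain ⟨m, hm⟩ := (ZMod.intCast_zmod_eq_zero_iff_dvd n 2).1 h0
      have hm' : n = 2 * m := by exact_mod_cast hm
      exact ⟨m, by rw [hpow2, ← hm']; exact hn⟩
    · have hk0 : (k : ZMod 2) = 0 := by rw [hpar, h1]; decide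
      obtain ⟨m, hm⟩ := (ZMod.intCast_zmod_eq_zero_iff_dvd k 2).1 hk0
      have hm' : k = 2 * m := by exact_mod_cast hm
      exact absurd ⟨m, by rw [hpow2, ← hm']; exact hk⟩ hcon
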